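/- Let X ⊆ ℤ, N ∈ ℕ, and suppose Y ⊆ {1,...,N} satisfies Y - Y ⊆ X. If A ⊆ {1,...,N} satisfies (A - A) ∩ X ⊆ {0}, then |A| · |Y| ≤ 2N. -/
import Mathlib


/-- If `Y ⊆ {1,…,N}` satisfies `Y - Y ⊆ X` and `A ⊆ {1,…,N}` satisfies
`(A - A) ∩ X ⊆ {0}`, then `|A| · |Y| ≤ 2N`. -/
theorem stmt_0 (X : Set ℤ) (N : ℕ) (A Y : Finset ℤ)
    (hA : ∀ a ∈ A, a ∈ Finset.Icc (1 : ℤ) N)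
    (hY : ∀ y ∈ Y, y ∈ Finset.Icc (1 : ℤ) N)
    (hYX : ∀ y ∈ Y, ∀ y' ∈ Y, y - y' ∈ X)
    (hAX : ∀ a ∈ A, ∀ a' ∈ A, a - a' ∈ X → a = a') :
    A.card * Y.card ≤ 2 * N := by
  have hinj : Set.InjOn (fun p : ℤ × ℤ => p.1 + p.2) (A ×ˢ Y : Finset (ℤ × ℤ)) := by
    rintro ⟨a, y⟩ hp ⟨a', y'⟩ hq h
    simp only [Finset.coe_product, Set.mem_prod, Finset.mem_coe] at hp hq
    simp only at h
    have hx : a - a' = y' - y := by linarith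
    have ha : a = a' := hAX a hp.1 a' hq.1 (hx ▸ hYX y' hq.2 y hp.2)
    have : y = y' := by linarith
    simp [ha, this]
  have hsub : (A ×ˢ Y).image (fun p : ℤ × ℤ => p.1 + p.2) ⊆ Finset.Icc 2 (2 * N : ℤ) := by
    intro z hz
    simp only [Finset.mem_image, Finset.mem_product] at hz
    obtain ⟨⟨a, y⟩, ⟨ha, hy⟩, rfl⟩ := hz
    have h1 := Finset.mem_Icc.mp (hA a ha)
    have h2 := Finset.mem_Icc.mp (hY y hy)
    rw [Finset.mem_Icc]
    constructor <;> push_cast <;> linarith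
  calc A.card * Y.card = (A ×ˢ Y).card := (Finset.card_product A Y).symm
    _ = ((A ×ˢ Y).image (fun p : ℤ × ℤ => p.1 + p.2)).card :=
        (Finset.card_image_of_injOn hinj).symm
    _ ≤ (Finset.Icc 2 (2 * N : ℤ)).card := Finset.card_le_card hsub
    _ ≤ 2 * N := by
        rw [Int.card_Icc]
        omega
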